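/- Let G : ℝ → ℝ be differentiable with G(0) = 0, let (X, μ) be a measure space, and let p : ℝ^m → X → ℝ be a parametrized family of probability densities with p(θ)(x) > 0 μ-a.e. and ∫_X p(θ)(x) dμ = 1 for every θ. Fix θ₀ ∈ ℝ^m and an index k. Assume that for μ-a.e. x the map θ ↦ p(θ)(x) has a partial derivative in the k-th direction, that differentiation under the integral sign is valid at θ₀ for A(θ) = D_G(p(θ)‖p(θ₀)) = ∫_X p(θ)(x) G(ln(p(θ)(x)/p(θ₀)(x))) dμ, and that ∫_X ∂_k p(θ₀)(x) dμ = 0. Then ∂_k A(θ₀) = 0, i.e., the gradient of the relative entropy group with respect to θ vanishes at θ = θ₀. -/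

import Mathlib

open MeasureTheory

/-- The gradient of the relative entropy group
`A(θ) = D_G(p(θ) ‖ p(θ₀)) = ∫ p(θ)(x) · G(ln (p(θ)(x)/p(θ₀)(x))) dμ`
with respect to `θ` vanishes at `θ = θ₀`: its `k`-th partial derivative at `θ₀` is `0`.

Here `p₁k` is the `k`-th partial derivative of `θ ↦ p θ x` at `θ₀` (μ-a.e.), and the
hypotheses `hq, hDUI` express that differentiation under the integral sign is valid
at `θ₀` for `A`. -/
theorem relative_entropy_group_grad_vanishes
    {X : Type*} [MeasurableSpace X] (μ : Measure X) {m : ℕ}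
    (G : ℝ → ℝ) (hG0 : G 0 = 0) (hGdiff : Differentiable ℝ G)
    (p : (Fin m → ℝ) → X → ℝ)
    -- `p` is a parametrized family of probability densities
    (hppos : ∀ θ : Fin m → ℝ, ∀ᵐ x ∂μ, 0 < p θ x)
    (hpone : ∀ θ : Fin m → ℝ, ∫ x, p θ x ∂μ = 1)
    (θ₀ : Fin m → ℝ) (k : Fin m)
    -- for μ-a.e. x, the map θ ↦ p θ x has a `k`-th partial derivative at θ₀
    (p₁k : X → ℝ)
    (hp₁k : ∀ᵐ x ∂μ,
      HasDerivAt (fun s => p (Function.update θ₀ k s) x) (p₁k x) (θ₀ k))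
    -- `A θ = D_G(p θ ‖ p θ₀)`
    (A : (Fin m → ℝ) → ℝ)
    (hA : ∀ θ, A θ = ∫ x, p θ x * G (Real.log (p θ x / p θ₀ x)) ∂μ)
    -- differentiation under the integral sign is valid at θ₀
    (q : X → ℝ)
    (hq : ∀ᵐ x ∂μ, HasDerivAt
      (fun s => p (Function.update θ₀ k s) x *
        G (Real.log (p (Function.update θ₀ k s) x / p θ₀ x)))
      (q x) (θ₀ k))
    (hDUI : HasDerivAt (fun s => A (Function.update θ₀ k s)) (∫ x, q x ∂μ) (θ₀ k))
    -- the integral of the `k`-th partial derivative of `p` vanishes at θ₀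
    (hvan : ∫ x, p₁k x ∂μ = 0) :
    HasDerivAt (fun s => A (Function.update θ₀ k s)) 0 (θ₀ k) := by
  have key : ∀ᵐ x ∂μ, q x = deriv G 0 * p₁k x := by
    filter_upwards [hq, hp₁k, hppos θ₀] with x hqx hpx hpos
    have hc : p θ₀ x ≠ 0 := ne_of_gt hpos
    have hupd : p (Function.update θ₀ k (θ₀ k)) x = p θ₀ x := by
      rw [Function.update_eq_self]
    have h1 : HasDerivAt
        (fun s => Real.log (p (Function.update θ₀ k s) x / p θ₀ x))
        (p₁k x / p θ₀ x) (θ₀ k) := by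
      have h := (hpx.div_const (p θ₀ x)).log
        (by rw [hupd]; exact div_ne_zero hc hc)
      have hone : p (Function.update θ₀ k (θ₀ k)) x / p θ₀ x = 1 := by
        rw [hupd, div_self hc]
      rw [hone] at h
      simpa using h
    have hone : Real.log (p (Function.update θ₀ k (θ₀ k)) x / p θ₀ x) = 0 := by
      rw [hupd, div_self hc, Real.log_one]
    have h2 : HasDerivAt
        (fun s => G (Real.log (p (Function.update θ₀ k s) x / p θ₀ x)))
        (deriv G 0 * (p₁k x / p θ₀ x)) (θ₀ k) := by
      have hG := (hGdiff
        (Real.log (p (Function.update θ₀ k (θ₀ k)) x / p θ₀ x))).hasDerivAt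
      have h := hG.comp (θ₀ k) h1
      rw [hone] at h
      exact h
    have h3 := hpx.mul h2
    have hval : Real.log (p (Function.update θ₀ k (θ₀ k)) x / p θ₀ x) = 0 := by
      rw [hupd, div_self hc, Real.log_one]
    rw [hval, hG0, hupd] at h3
    have := hqx.unique h3
    rw [this]
    field_simp
    ring
  have hiq : ∫ x, q x ∂μ = 0 := by
    rw [integral_congr_ae key, integral_const_mul, hvan, mul_zero]
  rw [← hiq]
  exact hDUI
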